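/- Let R be a commutative ring with multiplicative identity. If every additive subgroup of (R, +) is also an ideal of R (i.e., for every additive subgroup H of R there is an ideal of R whose underlying set equals H), then R is isomorphic as a ring to ℤ or to ℤ_n for some positive integer n. -/

import Mathlib

/-- If every additive subgroup of a unital commutative ring `R` is an ideal,
then `R` is isomorphic to `ℤ` or to `ℤ/n` for some positive integer `n`. -/
theorem subgroup_ideal_implies_Z_or_Zn (R : Type*) [CommRing R]
    (h : ∀ H : AddSubgroup R, ∃ I : Ideal R, (I : Set R) = (H : Set R)) :
    Nonempty (R ≃+* ℤ) ∨ ∃ n : ℕ, 0 < n ∧ Nonempty (R ≃+* ZMod n) := by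
  -- The subgroup generated by 1 is an ideal containing 1, hence all of R.
  have hsurj : Function.Surjective (Int.castRingHom R) := by
    obtain ⟨I, hI⟩ := h (AddSubgroup.zmultiples (1 : R))
    have h1 : (1 : R) ∈ I := by
      rw [SetLike.mem_coe.symm, hI]
      exact AddSubgroup.mem_zmultiples 1
    have hIT : I = ⊤ := Ideal.eq_top_of_isUnit_mem I h1 isUnit_one
    intro r
    have hr : r ∈ AddSubgroup.zmultiples (1 : R) := by
      rw [← SetLike.mem_coe, ← hI, hIT]; trivial
    obtain ⟨n, hn⟩ := hr
    exact ⟨n, by simpa [zsmul_eq_mul] using hn⟩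
  have hker : RingHom.ker (Int.castRingHom R) = Ideal.span {(ringChar R : ℤ)} := by
    ext x
    simp [RingHom.mem_ker, Ideal.mem_span_singleton,
      (CharP.intCast_eq_zero_iff R (ringChar R) x)]
  rcases eq_or_ne (ringChar R) 0 with h0 | h0
  · left
    have hinj : Function.Injective (Int.castRingHom R) := by
      rw [RingHom.injective_iff_ker_eq_bot, hker, h0]
      simp
    exact ⟨(RingEquiv.ofBijective (Int.castRingHom R) ⟨hinj, hsurj⟩).symm⟩
  · right
    refine ⟨ringChar R, Nat.pos_of_ne_zero h0, ⟨?_⟩⟩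
    have e1 := (RingHom.quotientKerEquivOfSurjective hsurj).symm
    replace e1 := e1.trans (Ideal.quotEquivOfEq hker)
    exact e1.trans (Int.quotientSpanNatEquivZMod (ringChar R))
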